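/- Let ρ : (Z_r)^n → D(C^{2^m}) map strings to 2^m-dimensional density matrices, and assume the matrix hypercontractive inequality ∑_S ((p-1)/(r-1))^{|S|} ‖ρ̂(S)‖_p^2 ≤ (r^{-n} ∑_x ‖ρ(x)‖_p^p)^{2/p} holds for p ∈ [1,2]. Then for every δ ∈ [0, 1/(r-1)], ∑_{S ∈ Z_r^n} δ^{|S|} ‖ρ̂(S)‖_1^2 ≤ 2^{2(r-1)δ m}. -/

import Mathlib

open Matrix ComplexOrder

/-- The Schatten `p`-norm of a complex `d × d` matrix. -/
noncomputable def schattenNorm {d : ℕ} (p : ℝ) (A : Matrix (Fin d) (Fin d) ℂ) : ℝ :=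
  (∑ i, ((Matrix.isHermitian_conjTranspose_mul_self A).eigenvalues i) ^ (p / 2)) ^ (1 / p)

/-- Fourier coefficient of a matrix-valued function on `(ℤ_r)^n`. -/
noncomputable def matFourier {r d n : ℕ} [NeZero r]
    (f : (Fin n → ZMod r) → Matrix (Fin d) (Fin d) ℂ) (S : Fin n → ZMod r) :
    Matrix (Fin d) (Fin d) ℂ :=
  (((r : ℂ) ^ n)⁻¹) •
    ∑ x : Fin n → ZMod r,
      (Complex.exp (2 * Real.pi * Complex.I / r) ^ (∑ i, (S i).val * (x i).val))⁻¹ • f x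

/-- Hamming weight of `S ∈ (ℤ_r)^n`. -/
def hammingWt {r n : ℕ} [NeZero r] (S : Fin n → ZMod r) : ℕ :=
  (Finset.univ.filter fun i => S i ≠ 0).card

section Aux

open Polynomial

set_option linter.unnecessarySimpa false
set_option linter.unusedTactic false

lemma my_charpoly_conj {d : ℕ} (U M V : Matrix (Fin d) (Fin d) ℂ)
    (hUV : U * V = 1) : (U * M * V).charpoly = M.charpoly := by
  set C' : ℂ →+* ℂ[X] := Polynomial.C with hC'
  have hUV' : C'.mapMatrix U * C'.mapMatrix V = 1 := by
    rw [← _root_.map_mul, hUV, _root_.map_one]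
  have key : charmatrix (U * M * V) = C'.mapMatrix U * charmatrix M * C'.mapMatrix V := by
    rw [charmatrix, charmatrix, mul_sub, sub_mul]
    congr 1
    · rw [mul_assoc, ((scalar_commute (X : ℂ[X]) (fun r => Commute.all _ r) (C'.mapMatrix V)).eq),
        ← mul_assoc, hUV', one_mul]
    · rw [← _root_.map_mul, ← _root_.map_mul]
  have h1 : (C'.mapMatrix U).det * (C'.mapMatrix V).det = 1 := by
    rw [← det_mul, hUV', det_one]
  rw [Matrix.charpoly, Matrix.charpoly, key, det_mul, det_mul]
  calc (C'.mapMatrix U).det * (charmatrix M).det * (C'.mapMatrix V).det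
      = (charmatrix M).det * ((C'.mapMatrix U).det * (C'.mapMatrix V).det) := by ring
    _ = (charmatrix M).det := by rw [h1, mul_one]

lemma my_charpoly_hermitian {d : ℕ} {M : Matrix (Fin d) (Fin d) ℂ} (hM : M.IsHermitian) :
    M.charpoly = ∏ i, (X - C ((hM.eigenvalues i : ℂ))) := by
  have hU : (hM.eigenvectorUnitary : Matrix (Fin d) (Fin d) ℂ) *
      (star hM.eigenvectorUnitary : Matrix (Fin d) (Fin d) ℂ) = 1 := by
    simpa using (Matrix.mem_unitaryGroup_iff.mp hM.eigenvectorUnitary.2)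
  conv_lhs => rw [hM.spectral_theorem, Unitary.conjStarAlgAut_apply]
  rw [my_charpoly_conj _ _ _ hU,
    charpoly_of_upperTriangular _ (blockTriangular_diagonal _)]
  simp [diagonal_apply_eq, Function.comp]

lemma my_roots_charpoly {d : ℕ} {M : Matrix (Fin d) (Fin d) ℂ} (hM : M.IsHermitian) :
    M.charpoly.roots = Finset.univ.val.map (fun i => ((hM.eigenvalues i : ℂ))) := by
  rw [my_charpoly_hermitian hM]
  have : (∏ i, (X - C ((hM.eigenvalues i : ℂ))))
      = ((Finset.univ.val.map (fun i => ((hM.eigenvalues i : ℂ)))).map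
          (fun a => X - C a)).prod := by
    rw [Multiset.map_map]
    rfl
  rw [this, Polynomial.roots_multiset_prod_X_sub_C]

lemma my_eig_sq {d : ℕ} {σ : Matrix (Fin d) (Fin d) ℂ} (hσ : σ.PosSemidef) :
    Finset.univ.val.map (fun i => (Matrix.isHermitian_conjTranspose_mul_self σ).eigenvalues i)
      = Finset.univ.val.map (fun i => (hσ.1.eigenvalues i) ^ 2) := by
  have hU : (hσ.1.eigenvectorUnitary : Matrix (Fin d) (Fin d) ℂ) *
      (star hσ.1.eigenvectorUnitary : Matrix (Fin d) (Fin d) ℂ) = 1 := by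
    simpa using (Matrix.mem_unitaryGroup_iff.mp hσ.1.eigenvectorUnitary.2)
  have hU' : (star hσ.1.eigenvectorUnitary : Matrix (Fin d) (Fin d) ℂ) *
      (hσ.1.eigenvectorUnitary : Matrix (Fin d) (Fin d) ℂ) = 1 := by
    simpa using (Matrix.mem_unitaryGroup_iff'.mp hσ.1.eigenvectorUnitary.2)
  have hσ2 : σᴴ * σ = (hσ.1.eigenvectorUnitary : Matrix (Fin d) (Fin d) ℂ) *
      diagonal (fun i => ((hσ.1.eigenvalues i : ℂ)) ^ 2) *
      (star hσ.1.eigenvectorUnitary : Matrix (Fin d) (Fin d) ℂ) := by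
    rw [show σᴴ = σ from hσ.1]
    conv_lhs => rw [hσ.1.spectral_theorem, Unitary.conjStarAlgAut_apply]
    set U : Matrix (Fin d) (Fin d) ℂ := (hσ.1.eigenvectorUnitary : Matrix (Fin d) (Fin d) ℂ)
    set D := diagonal (RCLike.ofReal ∘ hσ.1.eigenvalues : Fin d → ℂ)
    calc (U * D * star U) * (U * D * star U)
        = U * (D * ((star U * U) * (D * star U))) := by
          simp only [mul_assoc]
      _ = U * (D * D) * star U := by rw [hU']; simp only [one_mul, mul_assoc]
      _ = U * diagonal (fun i => ((hσ.1.eigenvalues i : ℂ)) ^ 2) * star U := by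
          congr 1
          congr 1
          rw [show D = diagonal (RCLike.ofReal ∘ hσ.1.eigenvalues : Fin d → ℂ) from rfl,
            diagonal_mul_diagonal]
          congr 1
          funext i
          simp [pow_two]
  have hch : (σᴴ * σ).charpoly = ∏ i, (X - C (((hσ.1.eigenvalues i : ℂ)) ^ 2)) := by
    rw [hσ2, my_charpoly_conj _ _ _ hU,
      charpoly_of_upperTriangular _ (blockTriangular_diagonal _)]
    simp [diagonal_apply_eq]
  have hroots : (Finset.univ.val.map
        (fun i => (((Matrix.isHermitian_conjTranspose_mul_self σ).eigenvalues i : ℂ))))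
      = Finset.univ.val.map (fun i => ((hσ.1.eigenvalues i : ℂ)) ^ 2) := by
    rw [← my_roots_charpoly (Matrix.isHermitian_conjTranspose_mul_self σ), hch]
    have : (∏ i, (X - C (((hσ.1.eigenvalues i : ℂ)) ^ 2)))
        = ((Finset.univ.val.map (fun i => ((hσ.1.eigenvalues i : ℂ)) ^ 2)).map
            (fun a => X - C a)).prod := by
      rw [Multiset.map_map]; rfl
    rw [this, Polynomial.roots_multiset_prod_X_sub_C]
  have := congrArg (Multiset.map Complex.re) hroots
  simpa [Multiset.map_map, Function.comp_def, ← Complex.ofReal_pow] using this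

lemma my_sum_g {d : ℕ} {σ : Matrix (Fin d) (Fin d) ℂ} (hσ : σ.PosSemidef) (g : ℝ → ℝ) :
    ∑ i, g ((Matrix.isHermitian_conjTranspose_mul_self σ).eigenvalues i)
      = ∑ i, g ((hσ.1.eigenvalues i) ^ 2) := by
  have := congrArg (fun s : Multiset ℝ => (s.map g).sum) (my_eig_sq hσ)
  simpa [Multiset.map_map, Finset.sum, Function.comp_def] using this

lemma my_trace_eq {d : ℕ} {M : Matrix (Fin d) (Fin d) ℂ} (hM : M.IsHermitian) :
    M.trace = ∑ i, ((hM.eigenvalues i : ℂ)) := by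
  conv_lhs => rw [hM.spectral_theorem, Unitary.conjStarAlgAut_apply]
  rw [Matrix.trace_mul_comm, ← mul_assoc]
  have hU' : (star hM.eigenvectorUnitary : Matrix (Fin d) (Fin d) ℂ) *
      (hM.eigenvectorUnitary : Matrix (Fin d) (Fin d) ℂ) = 1 := by
    simpa using (Matrix.mem_unitaryGroup_iff'.mp hM.eigenvectorUnitary.2)
  rw [hU', one_mul, Matrix.trace_diagonal]
  rfl

lemma my_eigen_sum_one {d : ℕ} {σ : Matrix (Fin d) (Fin d) ℂ} (hσ : σ.PosSemidef)
    (htr : σ.trace = 1) : ∑ i, hσ.1.eigenvalues i = 1 := by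
  have h0 := my_trace_eq hσ.1
  rw [htr] at h0
  have : ((∑ i, hσ.1.eigenvalues i : ℝ) : ℂ) = ((1 : ℝ) : ℂ) := by
    push_cast
    rw [← h0]
  exact_mod_cast this

lemma my_density_bound {d : ℕ} {σ : Matrix (Fin d) (Fin d) ℂ} (hσ : σ.PosSemidef)
    (htr : σ.trace = 1) {p : ℝ} (hp : 1 ≤ p) :
    schattenNorm p σ ^ p ≤ 1 := by
  have hp0 : (0:ℝ) < p := lt_of_lt_of_le one_pos hp
  have hev := fun i => hσ.eigenvalues_nonneg i
  have hsum1 := my_eigen_sum_one hσ htr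
  have hle1 : ∀ i, hσ.1.eigenvalues i ≤ 1 := by
    intro i
    rw [← hsum1]
    exact Finset.single_le_sum (fun j _ => hev j) (Finset.mem_univ i)
  have hkey : ∑ i, ((Matrix.isHermitian_conjTranspose_mul_self σ).eigenvalues i) ^ (p / 2) ≤ 1 := by
    rw [my_sum_g hσ (fun x => x ^ (p/2))]
    calc ∑ i, ((hσ.1.eigenvalues i ^ 2 : ℝ)) ^ (p/2)
        = ∑ i, (hσ.1.eigenvalues i) ^ p := by
          refine Finset.sum_congr rfl fun i _ => ?_
          rw [← Real.rpow_natCast (hσ.1.eigenvalues i) 2, ← Real.rpow_mul (hev i)]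
          push_cast
          rw [show (2:ℝ)*(p/2)=p by ring]
      _ ≤ ∑ i, hσ.1.eigenvalues i := by
          refine Finset.sum_le_sum fun i _ => ?_
          rcases eq_or_lt_of_le (hev i) with h0 | h0
          · rw [← h0, Real.zero_rpow (by positivity)]
          · calc (hσ.1.eigenvalues i) ^ p ≤ (hσ.1.eigenvalues i) ^ (1:ℝ) :=
                Real.rpow_le_rpow_of_exponent_ge h0 (hle1 i) hp
              _ = hσ.1.eigenvalues i := Real.rpow_one _
      _ = 1 := hsum1
  have hnn : (0:ℝ) ≤ ∑ i, ((Matrix.isHermitian_conjTranspose_mul_self σ).eigenvalues i) ^ (p / 2) :=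
    Finset.sum_nonneg fun i _ => Real.rpow_nonneg
      ((posSemidef_conjTranspose_mul_self σ).eigenvalues_nonneg i) _
  rw [schattenNorm, ← Real.rpow_mul hnn, one_div_mul_cancel (ne_of_gt hp0), Real.rpow_one]
  exact hkey

lemma my_schatten_nonneg {d : ℕ} (p : ℝ) (A : Matrix (Fin d) (Fin d) ℂ) :
    0 ≤ schattenNorm p A :=
  Real.rpow_nonneg (Finset.sum_nonneg fun i _ =>
    Real.rpow_nonneg ((posSemidef_conjTranspose_mul_self A).eigenvalues_nonneg i) _) _

lemma my_norm_mono {d : ℕ} (A : Matrix (Fin d) (Fin d) ℂ) {p : ℝ} (hp : 1 ≤ p) :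
    schattenNorm 1 A ≤ (d:ℝ) ^ (1 - p⁻¹) * schattenNorm p A := by
  set μ := (Matrix.isHermitian_conjTranspose_mul_self A).eigenvalues with hμdef
  have hμ : ∀ i, 0 ≤ μ i := fun i => (posSemidef_conjTranspose_mul_self A).eigenvalues_nonneg i
  have h := Real.inner_le_weight_mul_Lp_of_nonneg Finset.univ hp (fun _ => 1)
      (fun i => μ i ^ ((1:ℝ)/2)) (fun _ => zero_le_one) (fun i => Real.rpow_nonneg (hμ i) _)
  simp only [one_mul] at h
  rw [Finset.sum_const, Finset.card_univ, Fintype.card_fin, nsmul_eq_mul, mul_one] at h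
  have h2 : ∀ i : Fin d, (μ i ^ ((1:ℝ)/2)) ^ p = μ i ^ (p/2) := fun i => by
    rw [← Real.rpow_mul (hμ i)]; congr 1; ring
  simp only [h2] at h
  rw [schattenNorm, schattenNorm]
  simp only [one_div, inv_one, Real.rpow_one]
  simp only [one_div] at h
  exact h

end Aux

/-- If `ρ` maps `(ℤ_r)^n` to `2^m`-dimensional density matrices and the matrix
hypercontractive inequality holds, then for every `δ ∈ [0, 1/(r-1)]`,
`∑_S δ^{|S|} ‖ρ̂(S)‖_1² ≤ 2^{2(r-1)δm}`. -/
theorem density_fourier_bound (r n m : ℕ) [NeZero r] (hr : 2 ≤ r)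
    (ρ : (Fin n → ZMod r) → Matrix (Fin (2 ^ m)) (Fin (2 ^ m)) ℂ)
    (hρ : ∀ x, (ρ x).PosSemidef ∧ (ρ x).trace = 1)
    (hyper : ∀ p : ℝ, 1 ≤ p → p ≤ 2 →
      ∑ S : Fin n → ZMod r,
          ((p - 1) / ((r : ℝ) - 1)) ^ hammingWt S * schattenNorm p (matFourier ρ S) ^ 2
        ≤ ((((r : ℝ) ^ n)⁻¹) * ∑ x : Fin n → ZMod r, schattenNorm p (ρ x) ^ p) ^ (2 / p)) :
    ∀ δ : ℝ, 0 ≤ δ → δ ≤ 1 / ((r : ℝ) - 1) →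
      ∑ S : Fin n → ZMod r, δ ^ hammingWt S * schattenNorm 1 (matFourier ρ S) ^ 2
        ≤ (2 : ℝ) ^ (2 * ((r : ℝ) - 1) * δ * m) := by
  intro δ hδ0 hδ1
  have hr2 : (2:ℝ) ≤ (r:ℝ) := by exact_mod_cast hr
  have hr0 : (0:ℝ) < (r:ℝ) - 1 := by linarith
  set p : ℝ := 1 + ((r:ℝ) - 1) * δ with hp_def
  have hp1 : 1 ≤ p := by nlinarith
  have hp0 : (0:ℝ) < p := by linarith
  have hδr : ((r:ℝ) - 1) * δ ≤ 1 := by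
    have := (le_div_iff₀ hr0).mp hδ1
    linarith
  have hp2 : p ≤ 2 := by rw [hp_def]; linarith
  have hcoef : (p - 1) / ((r:ℝ) - 1) = δ := by
    rw [hp_def]
    field_simp
    ring
  have hkey := hyper p hp1 hp2
  rw [hcoef] at hkey
  -- RHS of hyper is at most 1
  have hrn : (0:ℝ) < (r:ℝ) ^ n := by positivity
  have hbase1 : ((((r : ℝ) ^ n)⁻¹) * ∑ x : Fin n → ZMod r, schattenNorm p (ρ x) ^ p) ≤ 1 := by
    have hsum : ∑ x : Fin n → ZMod r, schattenNorm p (ρ x) ^ p ≤ (r:ℝ) ^ n := by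
      calc ∑ x : Fin n → ZMod r, schattenNorm p (ρ x) ^ p
          ≤ ∑ _x : Fin n → ZMod r, (1:ℝ) :=
            Finset.sum_le_sum fun x _ => my_density_bound (hρ x).1 (hρ x).2 hp1
        _ = (r:ℝ) ^ n := by
            simp [Finset.sum_const, Finset.card_univ]
    calc (((r : ℝ) ^ n)⁻¹) * ∑ x : Fin n → ZMod r, schattenNorm p (ρ x) ^ p
        ≤ (((r : ℝ) ^ n)⁻¹) * (r:ℝ) ^ n := by
          apply mul_le_mul_of_nonneg_left hsum (by positivity)
      _ = 1 := inv_mul_cancel₀ (ne_of_gt hrn)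
  have hbase0 : (0:ℝ) ≤ (((r : ℝ) ^ n)⁻¹) * ∑ x : Fin n → ZMod r, schattenNorm p (ρ x) ^ p := by
    apply mul_nonneg (by positivity)
    exact Finset.sum_nonneg fun x _ => Real.rpow_nonneg (my_schatten_nonneg _ _) _
  have hRHS : ((((r : ℝ) ^ n)⁻¹) * ∑ x : Fin n → ZMod r, schattenNorm p (ρ x) ^ p) ^ (2 / p)
      ≤ 1 := Real.rpow_le_one hbase0 hbase1 (by positivity)
  have htot : ∑ S : Fin n → ZMod r, δ ^ hammingWt S * schattenNorm p (matFourier ρ S) ^ 2 ≤ 1 :=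
    hkey.trans hRHS
  -- the constant
  set c : ℝ := ((2:ℝ) ^ m) ^ (1 - p⁻¹) with hc_def
  have hc0 : 0 ≤ c := Real.rpow_nonneg (by positivity) _
  have hmono : ∀ S : Fin n → ZMod r,
      schattenNorm 1 (matFourier ρ S) ≤ c * schattenNorm p (matFourier ρ S) := by
    intro S
    have := my_norm_mono (matFourier ρ S) hp1
    rw [hc_def]
    convert this using 3
    push_cast
    ring
  calc ∑ S : Fin n → ZMod r, δ ^ hammingWt S * schattenNorm 1 (matFourier ρ S) ^ 2
      ≤ ∑ S : Fin n → ZMod r, δ ^ hammingWt S *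
          (c ^ 2 * schattenNorm p (matFourier ρ S) ^ 2) := by
        refine Finset.sum_le_sum fun S _ => ?_
        apply mul_le_mul_of_nonneg_left _ (pow_nonneg hδ0 _)
        rw [← mul_pow]
        exact pow_le_pow_left₀ (my_schatten_nonneg _ _) (hmono S) 2
    _ = c ^ 2 * ∑ S : Fin n → ZMod r, δ ^ hammingWt S * schattenNorm p (matFourier ρ S) ^ 2 := by
        rw [Finset.mul_sum]
        exact Finset.sum_congr rfl fun S _ => by ring
    _ ≤ c ^ 2 * 1 := mul_le_mul_of_nonneg_left htot (by positivity)
    _ ≤ (2 : ℝ) ^ (2 * ((r : ℝ) - 1) * δ * m) := by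
        rw [mul_one, hc_def]
        have h2m : ((2:ℝ) ^ m) = (2:ℝ) ^ (m:ℝ) := by
          rw [Real.rpow_natCast]
        rw [h2m, ← Real.rpow_natCast ((((2:ℝ) ^ (m:ℝ))) ^ (1 - p⁻¹)) 2,
          ← Real.rpow_mul (by positivity), ← Real.rpow_mul (by positivity)]
        apply Real.rpow_le_rpow_of_exponent_le one_le_two
        have hinv : p⁻¹ * p = 1 := inv_mul_cancel₀ (ne_of_gt hp0)
        have hexp : 1 - p⁻¹ ≤ p - 1 := by nlinarith [sq_nonneg (p - 1)]
        have hmnn : (0:ℝ) ≤ (m:ℝ) := Nat.cast_nonneg m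
        have hp1' : p - 1 = ((r:ℝ) - 1) * δ := by rw [hp_def]; ring
        push_cast
        nlinarith [mul_le_mul_of_nonneg_left hexp hmnn]
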